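/- arXiv:2006.02883 — 4 statements merged into one kernel-verified Lean document; each statement's English description precedes it below -/
import Mathlib

section
/- Let K be a field and F the free Lie algebra over K on m ≥ 2 generators x₁,…,x_m. For any nonzero K-linear map χ : F/[F,F] → K, the ideal I_χ = π⁻¹(ker χ) (where π : F → F/[F,F] is the projection) is not finitely generated as a Lie algebra. -/
universe u

attribute [local instance 100] LieRing.ofAssociativeRing

open Polynomial


open Polynomial

namespace Statement12Aux

variable {K : Type u} [Field K]

lemma aux2 {R : Type*} [CommRing R] (x y : Matrix (Fin 2) (Fin 2) R)
    (hx0 : x 1 0 = 0) (hx1 : x 1 1 = 0) (hy0 : y 1 0 = 0) (hy1 : y 1 1 = 0) :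
    ⁅x, y⁆ = !![0, x 0 0 * y 0 1 - y 0 0 * x 0 1; 0, 0] := by
  ext i j
  rw [Ring.lie_def]
  fin_cases i <;> fin_cases j <;>
    simp [Matrix.mul_apply, Fin.sum_univ_two, hx0, hx1, hy0, hy1] <;> ring

/-- The Lie subalgebra of matrices `!![a * X, p; 0, 0]`. -/
def S (K : Type u) [Field K] : LieSubalgebra K (Matrix (Fin 2) (Fin 2) K[X]) where
  carrier := {x | x 1 0 = 0 ∧ x 1 1 = 0 ∧ x 0 0 ∈ Submodule.span K {(X : K[X])}}
  add_mem' := by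
    rintro x y ⟨hx0, hx1, hx2⟩ ⟨hy0, hy1, hy2⟩
    exact ⟨by simp [Matrix.add_apply, hx0, hy0],
      by simp [Matrix.add_apply, hx1, hy1], by exact Submodule.add_mem _ hx2 hy2⟩
  zero_mem' := ⟨rfl, rfl, Submodule.zero_mem _⟩
  smul_mem' := by
    rintro c x ⟨hx0, hx1, hx2⟩
    exact ⟨by simp [Matrix.smul_apply, hx0], by simp [Matrix.smul_apply, hx1],
      by exact Submodule.smul_mem _ _ hx2⟩
  lie_mem' := by
    rintro x y ⟨hx0, hx1, hx2⟩ ⟨hy0, hy1, hy2⟩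
    rw [aux2 x y hx0 hx1 hy0 hy1]
    exact ⟨by simp, by simp, by simpa using Submodule.zero_mem _⟩

lemma mem_S {x : Matrix (Fin 2) (Fin 2) K[X]} :
    x ∈ S K ↔ x 1 0 = 0 ∧ x 1 1 = 0 ∧ x 0 0 ∈ Submodule.span K {(X : K[X])} :=
  Iff.rfl

/-- The abelian Lie subalgebra of matrices `!![0, p; 0, 0]` with `p ∈ Q`. -/
def P (Q : Submodule K K[X]) : LieSubalgebra K (Matrix (Fin 2) (Fin 2) K[X]) where
  carrier := {x | x 0 0 = 0 ∧ x 1 0 = 0 ∧ x 1 1 = 0 ∧ x 0 1 ∈ Q}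
  add_mem' := by
    rintro x y ⟨hx, hx0, hx1, hx2⟩ ⟨hy, hy0, hy1, hy2⟩
    exact ⟨by simp [Matrix.add_apply, hx, hy], by simp [Matrix.add_apply, hx0, hy0],
      by simp [Matrix.add_apply, hx1, hy1], by exact Submodule.add_mem _ hx2 hy2⟩
  zero_mem' := ⟨rfl, rfl, rfl, Submodule.zero_mem _⟩
  smul_mem' := by
    rintro c x ⟨hx, hx0, hx1, hx2⟩
    exact ⟨by simp [Matrix.smul_apply, hx], by simp [Matrix.smul_apply, hx0],
      by simp [Matrix.smul_apply, hx1], by exact Submodule.smul_mem _ _ hx2⟩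
  lie_mem' := by
    rintro x y ⟨hx, hx0, hx1, hx2⟩ ⟨hy, hy0, hy1, hy2⟩
    rw [aux2 x y hx0 hx1 hy0 hy1, hx, hy]
    exact ⟨by simp, by simp, by simp, by simpa using Submodule.zero_mem _⟩

lemma mem_P {Q : Submodule K K[X]} {x : Matrix (Fin 2) (Fin 2) K[X]} :
    x ∈ P Q ↔ x 0 0 = 0 ∧ x 1 0 = 0 ∧ x 1 1 = 0 ∧ x 0 1 ∈ Q :=
  Iff.rfl

/-- Reading off the `(0,0)` entry on `S` is a Lie algebra morphism to the abelian `K[X]`. -/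
def τ : S K →ₗ⁅K⁆ K[X] where
  toFun M := (M : Matrix (Fin 2) (Fin 2) K[X]) 0 0
  map_add' _ _ := rfl
  map_smul' _ _ := rfl
  map_lie' := by
    intro M N
    obtain ⟨hM0, hM1, -⟩ := M.2
    obtain ⟨hN0, hN1, -⟩ := N.2
    show (⁅(M : Matrix (Fin 2) (Fin 2) K[X]), (N : Matrix (Fin 2) (Fin 2) K[X])⁆) 0 0
      = ⁅(M : Matrix (Fin 2) (Fin 2) K[X]) 0 0, (N : Matrix (Fin 2) (Fin 2) K[X]) 0 0⁆
    rw [aux2 _ _ hM0 hM1 hN0 hN1]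
    simp only [Ring.lie_def]
    simp
    ring

/-- `a ↦ C a * X` as a Lie algebra morphism between abelian Lie algebras. -/
noncomputable def uu : K →ₗ⁅K⁆ K[X] where
  toFun a := C a * X
  map_add' a b := by simp [add_mul]
  map_smul' a b := by simp [smul_eq_C_mul]; ring
  map_lie' := by
    intro a b
    show C ⁅a, b⁆ * X = ⁅C a * X, C b * X⁆
    rw [Ring.lie_def, Ring.lie_def, mul_comm a b, sub_self, mul_comm (C b * X), sub_self]
    simp

lemma τ_apply (M : S K) : τ M = (M : Matrix (Fin 2) (Fin 2) K[X]) 0 0 := rfl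

lemma uu_apply (a : K) : uu (K := K) a = C a * X := rfl

lemma final_contradiction (Q : Submodule K K[X]) (hfg : Q.FG)
    (h : ∀ n : ℕ, (X : K[X]) ^ n ∈ Q) : False := by
  have hQtop : Q = ⊤ := by
    rw [eq_top_iff, ← (Polynomial.basisMonomials K).span_eq, Submodule.span_le]
    rintro p ⟨n, rfl⟩
    have : (Polynomial.basisMonomials K) n = (X : K[X]) ^ n := by
      simp [X_pow_eq_monomial]
    rw [this]
    exact h n
  rw [hQtop] at hfg
  haveI : Module.Finite K K[X] := Module.finite_def.mpr hfg
  haveI := Module.Finite.finite_basis (Polynomial.basisMonomials K)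
  exact not_finite ℕ

end Statement12Aux

namespace Statement12Aux

variable {K : Type u} [Field K]

/-- The images of the generators. -/
noncomputable def gen {m : ℕ} (g : Fin m → K) (k i : Fin m) : Matrix (Fin 2) (Fin 2) K[X] :=
  !![C (g i) * X, if i = k then 1 else 0; 0, 0]

lemma gen_mem_S {m : ℕ} (g : Fin m → K) (k i : Fin m) : gen g k i ∈ S K := by
  rw [mem_S]
  refine ⟨by simp [gen], by simp [gen], ?_⟩
  have := Submodule.smul_mem (Submodule.span K {(X : K[X])}) (g i)
    (Submodule.mem_span_singleton_self (X : K[X]))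
  rw [smul_eq_C_mul] at this
  simpa [gen] using this

lemma gen_00 {m : ℕ} (g : Fin m → K) (k i : Fin m) : gen g k i 0 0 = C (g i) * X := by
  simp [gen]

lemma gen_bracket {m : ℕ} (g : Fin m → K) (k j : Fin m) (p : K[X]) :
    ⁅gen g k j, !![0, p; 0, 0]⁆ = !![0, (C (g j) * X) * p; 0, 0] := by
  rw [aux2 _ _ (by simp [gen]) (by simp [gen]) (by simp) (by simp)]
  ext i l
  fin_cases i <;> fin_cases l <;> simp [gen]

lemma gen_combo {m : ℕ} (g : Fin m → K) {k j : Fin m} (hjk : j ≠ k) :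
    g j • gen g k k - g k • gen g k j = !![0, C (g j); 0, 0] := by
  have hjk' : ¬ j = k := hjk
  ext i l
  fin_cases i <;> fin_cases l <;> simp [gen, hjk', smul_eq_C_mul] <;> ring

end Statement12Aux

/-- Let `K` be a field and `F` the free Lie algebra over `K` on `m ≥ 2`
generators.  For any nonzero `K`-linear map `χ : F/[F,F] → K`, the ideal
`I_χ = π⁻¹(ker χ)` is not finitely generated as a Lie algebra. -/
theorem statement12 (K : Type u) [Field K] (m : ℕ) (hm : 2 ≤ m)
    (χ : (FreeLieAlgebra K (Fin m) ⧸
        LieSubmodule.toSubmodule (⁅(⊤ : LieIdeal K (FreeLieAlgebra K (Fin m))),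
          (⊤ : LieIdeal K (FreeLieAlgebra K (Fin m)))⁆ :
          LieIdeal K (FreeLieAlgebra K (Fin m)))) →ₗ[K] K)
    (hχ : χ ≠ 0) :
    ¬ ∃ s : Set (FreeLieAlgebra K (Fin m)), s.Finite ∧
      ((LieSubalgebra.lieSpan K (FreeLieAlgebra K (Fin m)) s : Set (FreeLieAlgebra K (Fin m)))
        = (LinearMap.ker (χ ∘ₗ
            (LieSubmodule.toSubmodule (⁅(⊤ : LieIdeal K (FreeLieAlgebra K (Fin m))),
              (⊤ : LieIdeal K (FreeLieAlgebra K (Fin m)))⁆ :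
              LieIdeal K (FreeLieAlgebra K (Fin m)))).mkQ) :
          Set (FreeLieAlgebra K (Fin m)))) := by
  classical
  open Statement12Aux in
  rintro ⟨s, hsfin, hs⟩
  set ψ : FreeLieAlgebra K (Fin m) →ₗ[K] K := χ ∘ₗ
    (LieSubmodule.toSubmodule (⁅(⊤ : LieIdeal K (FreeLieAlgebra K (Fin m))),
      (⊤ : LieIdeal K (FreeLieAlgebra K (Fin m)))⁆ :
      LieIdeal K (FreeLieAlgebra K (Fin m)))).mkQ with hψdef
  -- ψ kills brackets
  have hψbr : ∀ a b : FreeLieAlgebra K (Fin m), ψ ⁅a, b⁆ = 0 := by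
    intro a b
    have hmem : ⁅a, b⁆ ∈ (⁅(⊤ : LieIdeal K (FreeLieAlgebra K (Fin m))),
        (⊤ : LieIdeal K (FreeLieAlgebra K (Fin m)))⁆ :
        LieIdeal K (FreeLieAlgebra K (Fin m))) :=
      LieSubmodule.lie_mem_lie (LieSubmodule.mem_top a) (LieSubmodule.mem_top b)
    have h2 : (LieSubmodule.toSubmodule (⁅(⊤ : LieIdeal K (FreeLieAlgebra K (Fin m))),
        (⊤ : LieIdeal K (FreeLieAlgebra K (Fin m)))⁆ :
        LieIdeal K (FreeLieAlgebra K (Fin m)))).mkQ ⁅a, b⁆ = 0 := by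
      rw [Submodule.mkQ_apply, Submodule.Quotient.mk_eq_zero]
      exact hmem
    rw [hψdef, LinearMap.comp_apply, h2, map_zero]
  -- membership criterion
  have hmem : ∀ x : FreeLieAlgebra K (Fin m),
      x ∈ LieSubalgebra.lieSpan K (FreeLieAlgebra K (Fin m)) s ↔ ψ x = 0 := by
    intro x
    have := Set.ext_iff.mp hs x
    simpa [LinearMap.mem_ker] using this
  -- ψ as a Lie algebra morphism into the abelian Lie algebra K
  let ψL : FreeLieAlgebra K (Fin m) →ₗ⁅K⁆ K :=
    { toLinearMap := ψ
      map_lie' := by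
        intro a b
        show ψ ⁅a, b⁆ = ⁅ψ a, ψ b⁆
        rw [hψbr, Ring.lie_def, mul_comm, sub_self] }
  -- find a generator on which ψ does not vanish
  obtain ⟨v, hv⟩ : ∃ v, χ v ≠ 0 := by
    by_contra h
    push_neg at h
    exact hχ (LinearMap.ext h)
  obtain ⟨y, rfl⟩ := Submodule.mkQ_surjective _ v
  have hy : ψ y ≠ 0 := hv
  set g : Fin m → K := fun i => ψ (FreeLieAlgebra.of K i) with hg
  obtain ⟨j, hj⟩ : ∃ j : Fin m, g j ≠ 0 := by
    by_contra h
    push_neg at h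
    have hz : ψL = (0 : FreeLieAlgebra K (Fin m) →ₗ⁅K⁆ K) :=
      FreeLieAlgebra.hom_ext fun i => by exact h i
    have : ψ y = 0 := by
      have := LieHom.congr_fun hz y
      exact (by simpa using this : ψL y = 0)
    exact hy this
  haveI : Nontrivial (Fin m) := Fin.nontrivial_iff_two_le.mpr hm
  obtain ⟨k, hk⟩ := exists_ne j
  have hjk : j ≠ k := hk.symm
  -- the representation
  let Φ : FreeLieAlgebra K (Fin m) →ₗ⁅K⁆ Matrix (Fin 2) (Fin 2) K[X] :=
    FreeLieAlgebra.lift K (gen g k)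
  have hΦof : ∀ i, Φ (FreeLieAlgebra.of K i) = gen g k i := fun i =>
    FreeLieAlgebra.lift_of_apply (gen g k) i
  let Φ' : FreeLieAlgebra K (Fin m) →ₗ⁅K⁆ S K :=
    FreeLieAlgebra.lift K fun i => (⟨gen g k i, gen_mem_S g k i⟩ : S K)
  have hΦS : ∀ z : FreeLieAlgebra K (Fin m), Φ z = (Φ' z : Matrix (Fin 2) (Fin 2) K[X]) := by
    have heq : Φ = (S K).incl.comp Φ' := FreeLieAlgebra.hom_ext fun i => by
      simp [Φ, Φ', FreeLieAlgebra.lift_of_apply]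
    intro z; rw [heq]; rfl
  have hΦrows : ∀ z : FreeLieAlgebra K (Fin m), Φ z 1 0 = 0 ∧ Φ z 1 1 = 0 := by
    intro z
    have h2 := mem_S.mp (Φ' z).2
    rw [hΦS z]
    exact ⟨h2.1, h2.2.1⟩
  have h00 : ∀ z : FreeLieAlgebra K (Fin m), Φ z 0 0 = C (ψ z) * X := by
    have he : (τ (K := K)).comp Φ' = (uu (K := K)).comp ψL :=
      FreeLieAlgebra.hom_ext fun i => by
        simp only [LieHom.comp_apply, Φ', ψL, FreeLieAlgebra.lift_of_apply,
          τ_apply, uu_apply, LieHom.coe_mk]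
        exact gen_00 g k i
    intro z
    have h3 := LieHom.congr_fun he z
    simp only [LieHom.comp_apply] at h3
    rw [hΦS z]
    exact h3
  -- the span of the generating set's (0,1) entries
  let e01 : FreeLieAlgebra K (Fin m) → K[X] := fun z => Φ z 0 1
  let Q : Submodule K K[X] := Submodule.span K (e01 '' s)
  -- all of the ideal maps into P Q
  have hIP : ∀ z : FreeLieAlgebra K (Fin m), ψ z = 0 → Φ z ∈ P Q := by
    have hsub : s ⊆ ((P Q).comap Φ : Set (FreeLieAlgebra K (Fin m))) := by
      intro x hx
      have hxI : ψ x = 0 := (hmem x).mp (LieSubalgebra.subset_lieSpan hx)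
      show Φ x ∈ P Q
      rw [mem_P]
      exact ⟨by rw [h00 x, hxI]; simp, (hΦrows x).1, (hΦrows x).2,
        Submodule.subset_span ⟨x, hx, rfl⟩⟩
    intro z hz
    exact LieSubalgebra.lieSpan_le.mpr hsub ((hmem z).mpr hz)
  -- the witnesses
  let w : FreeLieAlgebra K (Fin m) :=
    g j • FreeLieAlgebra.of K k - g k • FreeLieAlgebra.of K j
  let a : ℕ → FreeLieAlgebra K (Fin m) := fun n =>
    (((LieAlgebra.ad K (FreeLieAlgebra K (Fin m))) (FreeLieAlgebra.of K j)) ^ n) w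
  have ha0 : a 0 = w := rfl
  have haS : ∀ n, a (n + 1) = ⁅FreeLieAlgebra.of K j, a n⁆ := by
    intro n
    show ((((LieAlgebra.ad K (FreeLieAlgebra K (Fin m))) (FreeLieAlgebra.of K j)) ^ (n + 1)) w) = _
    rw [pow_succ']
    rfl
  have hψw : ψ w = 0 := by
    have : ψ w = g j * g k - g k * g j := by
      simp [w, map_sub, map_smul, smul_eq_mul, hg]
    rw [this, mul_comm, sub_self]
  have hψa : ∀ n, ψ (a n) = 0 := by
    intro n
    induction n with
    | zero => rw [ha0]; exact hψw
    | succ n ih => rw [haS n, hψbr]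
  have hΦw : Φ w = !![0, C (g j); 0, 0] := by
    have h4 : Φ w = g j • gen g k k - g k • gen g k j := by
      simp [w, map_sub, map_smul, hΦof]
    rw [h4, gen_combo g hjk]
  have hΦa : ∀ n, Φ (a n) = !![0, (C (g j) * X) ^ n * C (g j); 0, 0] := by
    intro n
    induction n with
    | zero => simpa [ha0] using hΦw
    | succ n ih =>
      rw [haS n, LieHom.map_lie, hΦof j, ih, gen_bracket, ← mul_assoc, ← pow_succ']
  -- conclude: Q contains all powers of X
  have hQX : ∀ n : ℕ, (X : K[X]) ^ n ∈ Q := by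
    intro n
    have h1 : (C (g j) * X) ^ n * C (g j) ∈ Q := by
      have h5 := mem_P.mp (hIP (a n) (hψa n))
      rw [hΦa n] at h5
      simpa using h5.2.2.2
    have h2 : (C (g j) * X) ^ n * C (g j) = ((g j) ^ (n + 1)) • (X : K[X]) ^ n := by
      rw [smul_eq_C_mul, mul_pow, ← C_pow, pow_succ, map_mul]
      ring
    have h3 := Q.smul_mem (((g j) ^ (n + 1))⁻¹) h1
    rw [h2, smul_smul, inv_mul_cancel₀ (pow_ne_zero _ hj), one_smul] at h3
    exact h3
  exact final_contradiction Q (Submodule.fg_span (hsfin.image e01)) hQX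
end

section
/- Let Γ be a finite simple graph, L_Γ the associated right-angled Artin Lie algebra over a field K (generated by V(Γ) with relations [v,w] = 0 for edges {v,w}), and χ a nonzero linear character on L_Γ/[L_Γ,L_Γ] with living subgraph Γ_χ (spanned by vertices with nonzero χ-value). If Γ_χ is connected and dominant in Γ, then the ideal I_χ = π⁻¹(ker χ) is generated as a Lie algebra by the kernel of χ restricted to the span of V(Γ); in particular I_χ is finitely generated. -/
universe u

attribute [local instance 100] LieRing.ofAssociativeRing

/-- Let `Γ` be a finite simple graph and `LΓ` the right-angled Artin Lie
algebra over a field `K` on `Γ` (presented by a surjection `π` from the free Lie algebra on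
the vertices whose kernel is the ideal generated by the brackets of adjacent vertices).
Let `χ` be a nonzero character, given by vertex values `c : V → K`.  If the living subgraph
`Γ_χ` is connected and dominant in `Γ`, then the ideal `I_χ = ker χ` is generated as a Lie
algebra by the kernel of `χ` restricted to the (image of the) span of the vertices; in
particular `I_χ` is finitely generated as a Lie algebra. -/
theorem statement13 (K : Type) [Field K] (V : Type) [Fintype V] [DecidableEq V]
    (G : SimpleGraph V)
    (LΓ : Type) [LieRing LΓ] [LieAlgebra K LΓ]
    (π : FreeLieAlgebra K V →ₗ⁅K⁆ LΓ) (hπ : Function.Surjective π)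
    (hker : π.ker = LieSubmodule.lieSpan K (FreeLieAlgebra K V)
      {x | ∃ v w : V, G.Adj v w ∧ x = ⁅FreeLieAlgebra.of K v, FreeLieAlgebra.of K w⁆})
    (c : V → K) (hc : c ≠ 0)
    (χ : LΓ →ₗ⁅K⁆ K) (hχ : ∀ v : V, χ (π (FreeLieAlgebra.of K v)) = c v)
    (hconn : (G.induce {v : V | c v ≠ 0}).Connected)
    (hdom : ∀ v : V, c v = 0 → ∃ w : V, c w ≠ 0 ∧ G.Adj v w) :
    ((LieSubalgebra.lieSpan K LΓ
        (((Submodule.map π.toLinearMap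
            (Submodule.span K (Set.range (fun v : V => FreeLieAlgebra.of K v))))
          ⊓ LinearMap.ker (χ : LΓ →ₗ⁅K⁆ K).toLinearMap : Submodule K LΓ) : Set LΓ)
        : Set LΓ) = (χ.ker : Set LΓ))
    ∧ ∃ s : Set LΓ, s.Finite ∧
      ((LieSubalgebra.lieSpan K LΓ s : Set LΓ) = (χ.ker : Set LΓ)) := by
  -- notation
  set x : V → LΓ := fun v => π (FreeLieAlgebra.of K v) with hx
  set W : Submodule K LΓ := Submodule.map π.toLinearMap
      (Submodule.span K (Set.range (fun v : V => FreeLieAlgebra.of K v))) with hWdef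
  set U : Submodule K LΓ := W ⊓ LinearMap.ker (χ : LΓ →ₗ⁅K⁆ K).toLinearMap with hUdef
  set H : LieSubalgebra K LΓ := LieSubalgebra.lieSpan K LΓ (U : Set LΓ) with hHdef
  obtain ⟨v₀, hv₀⟩ : ∃ v, c v ≠ 0 := by
    by_contra h
    push_neg at h
    exact hc (funext h)
  -- W is the span of the x v
  have hW : W = Submodule.span K (Set.range x) := by
    rw [hWdef, Submodule.map_span, ← Set.range_comp]
    rfl
  have hxW : ∀ v, x v ∈ W := fun v => hW ▸ Submodule.subset_span (Set.mem_range_self v)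
  have hχx : ∀ v, χ (x v) = c v := hχ
  have hmemU : ∀ y : LΓ, y ∈ U ↔ y ∈ W ∧ χ y = 0 := by
    intro y
    rw [hUdef, Submodule.mem_inf, LinearMap.mem_ker]
    rfl
  -- relations
  have hrel : ∀ v w, G.Adj v w → ⁅x v, x w⁆ = 0 := by
    intro v w hvw
    have : ⁅FreeLieAlgebra.of K v, FreeLieAlgebra.of K w⁆ ∈ π.ker := by
      rw [hker]
      exact LieSubmodule.subset_lieSpan ⟨v, w, hvw, rfl⟩
    rw [LieHom.mem_ker] at this
    simpa [hx] using this
  -- standard degree-one elements of U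
  have hdvw : ∀ v w, c w ≠ 0 → x v - (c v / c w) • x w ∈ U := by
    intro v w hw
    rw [hmemU]
    refine ⟨sub_mem (hxW v) (Submodule.smul_mem _ _ (hxW w)), ?_⟩
    rw [map_sub χ, map_smul χ, hχx, hχx, smul_eq_mul, div_mul_cancel₀ _ hw, sub_self]
  -- the finite generating set E
  set E : Set LΓ := (x '' {w | c w = 0}) ∪
      ((fun p : V × V => x p.1 - (c p.1 / c p.2) • x p.2) ''
        {p : V × V | c p.1 ≠ 0 ∧ c p.2 ≠ 0 ∧ G.Adj p.1 p.2}) with hEdef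
  have hEfin : E.Finite :=
    (Set.Finite.image _ (Set.toFinite _)).union (Set.Finite.image _ (Set.toFinite _))
  have hEU : E ⊆ (U : Set LΓ) := by
    rintro _ (⟨w, hw, rfl⟩ | ⟨⟨a, b⟩, ⟨ha, hb, hab⟩, rfl⟩)
    · rw [Set.mem_setOf_eq] at hw
      exact (hmemU _).2 ⟨hxW w, by rw [hχx, hw]⟩
    · exact hdvw a b hb
  have hspanEH : Submodule.span K E ≤ H.toSubmodule := by
    rw [Submodule.span_le]
    exact hEU.trans (LieSubalgebra.subset_lieSpan)
  -- differences along edges of the living subgraph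
  have hdiff : ∀ a b : V, c a ≠ 0 → c b ≠ 0 → G.Adj a b →
      (c a)⁻¹ • x a - (c b)⁻¹ • x b ∈ Submodule.span K E := by
    intro a b ha hb hab
    have he : x a - (c a / c b) • x b ∈ Submodule.span K E :=
      Submodule.subset_span (Or.inr ⟨⟨a, b⟩, ⟨ha, hb, hab⟩, rfl⟩)
    have : (c a)⁻¹ • x a - (c b)⁻¹ • x b = (c a)⁻¹ • (x a - (c a / c b) • x b) := by
      rw [smul_sub, smul_smul]
      congr 2
      field_simp
    rw [this]
    exact Submodule.smul_mem _ _ he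
  -- differences along paths in the living subgraph
  have hpath : ∀ a b : {v : V | c v ≠ 0},
      (c (a : V))⁻¹ • x (a : V) - (c (b : V))⁻¹ • x (b : V) ∈ Submodule.span K E := by
    intro a b
    obtain ⟨w⟩ := hconn.preconnected a b
    induction w with
    | nil => rw [sub_self]; exact zero_mem _
    | @cons u v' b hadj p ih =>
        have hGadj : G.Adj (u : V) (v' : V) := hadj
        have h1 := hdiff (u : V) (v' : V) u.2 v'.2 hGadj
        have : (c (u : V))⁻¹ • x (u : V) - (c (b : V))⁻¹ • x (b : V) =
            ((c (u : V))⁻¹ • x (u : V) - (c (v' : V))⁻¹ • x (v' : V)) +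
            ((c (v' : V))⁻¹ • x (v' : V) - (c (b : V))⁻¹ • x (b : V)) := by abel
        rw [this]
        exact add_mem h1 ih
  -- U is contained in the span of E
  have hUspan : (U : Set LΓ) ⊆ (Submodule.span K E : Set LΓ) := by
    intro u hu
    obtain ⟨huW, huχ⟩ := (hmemU u).1 hu
    rw [hW] at huW
    obtain ⟨a, rfl⟩ := (Submodule.mem_span_range_iff_exists_fun K).1 huW
    have hsum : ∑ v, a v * c v = 0 := by
      rw [← huχ]; rw [show χ (∑ v, a v • x v) = ∑ v, χ (a v • x v) from map_sum χ.toLinearMap _ _]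
      congr 1
      ext v
      rw [map_smul χ, hχx, smul_eq_mul]
    have hrw : ∑ v, a v • x v =
        ∑ v, (a v • x v - (a v * c v) • ((c v₀)⁻¹ • x v₀)) := by
      rw [Finset.sum_sub_distrib, ← Finset.sum_smul, hsum, zero_smul, sub_zero]
    rw [hrw]
    refine sum_mem fun v _ => ?_
    by_cases hcv : c v = 0
    · have : a v • x v - (a v * c v) • ((c v₀)⁻¹ • x v₀) = a v • x v := by
        rw [hcv, mul_zero, zero_smul, sub_zero]
      rw [this]
      exact Submodule.smul_mem _ _ (Submodule.subset_span (Or.inl ⟨v, hcv, rfl⟩))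
    · have : a v • x v - (a v * c v) • ((c v₀)⁻¹ • x v₀) =
          (a v * c v) • ((c v)⁻¹ • x v - (c v₀)⁻¹ • x v₀) := by
        rw [smul_sub, smul_smul, smul_smul, mul_inv_cancel_right₀ hcv]
      rw [this]
      exact Submodule.smul_mem _ _ (hpath ⟨v, hcv⟩ ⟨v₀, hv₀⟩)
  -- U sits in H
  have hUH : ∀ y ∈ U, y ∈ H := fun y hy => LieSubalgebra.subset_lieSpan hy
  -- bracketing with x v₀ preserves membership in H, first for elements of U
  have hadU : ∀ u ∈ U, ⁅x v₀, u⁆ ∈ H := by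
    have key : ∀ u ∈ U, ∀ w : V, c w ≠ 0 → ⁅x w, u⁆ = 0 → ⁅x v₀, u⁆ ∈ H := by
      intro u hu w hw h0
      have hd : x v₀ - (c v₀ / c w) • x w ∈ U := hdvw v₀ w hw
      have : ⁅x v₀, u⁆ = ⁅x v₀ - (c v₀ / c w) • x w, u⁆ + (c v₀ / c w) • ⁅x w, u⁆ := by
        rw [sub_lie, smul_lie]
        abel
      rw [this, h0, smul_zero, add_zero]
      exact H.lie_mem (hUH _ hd) (hUH _ hu)
    -- the set of u with ⁅x v₀, u⁆ ∈ H is a submodule containing E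
    have hE' : ∀ e ∈ E, ⁅x v₀, e⁆ ∈ H := by
      rintro _ (⟨w, hw, rfl⟩ | ⟨⟨a, b⟩, ⟨ha, hb, hab⟩, rfl⟩)
      · rw [Set.mem_setOf_eq] at hw
        obtain ⟨w', hw', hadj⟩ := hdom w hw
        exact key _ ((hmemU _).2 ⟨hxW w, by rw [hχx, hw]⟩) w' hw' (hrel w' w hadj.symm)
      · refine key _ (hdvw a b hb) b hb ?_
        rw [lie_sub, lie_smul, lie_self, smul_zero, sub_zero, ← lie_skew,
          hrel a b hab, neg_zero]
    intro u hu
    have hcomap : Submodule.span K E ≤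
        Submodule.comap ((LieAlgebra.ad K LΓ) (x v₀)) H.toSubmodule := by
      rw [Submodule.span_le]
      intro e he
      exact hE' e he
    exact hcomap (hUspan hu)
  -- bracketing with x v₀ preserves membership in H, for all of H
  have hadH : ∀ h ∈ H, ⁅x v₀, h⁆ ∈ H := by
    intro h hh
    have hh' : h ∈ LieSubalgebra.lieSpan K LΓ (U : Set LΓ) := hh
    have : h ∈ H ∧ ⁅x v₀, h⁆ ∈ H :=
      LieSubalgebra.lieSpan_induction (R := K) (L := LΓ) (s := (U : Set LΓ))
        (p := fun y _ => y ∈ H ∧ ⁅x v₀, y⁆ ∈ H)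
        (fun u hu => ⟨hUH u hu, hadU u hu⟩)
        ⟨H.zero_mem, by rw [lie_zero]; exact H.zero_mem⟩
        (fun y z _ _ hy hz => ⟨H.add_mem hy.1 hz.1, by rw [lie_add]; exact H.add_mem hy.2 hz.2⟩)
        (fun r y _ hy => ⟨H.smul_mem r hy.1, by rw [lie_smul]; exact H.smul_mem r hy.2⟩)
        (fun y z _ _ hy hz => ⟨H.lie_mem hy.1 hz.1, by
          rw [leibniz_lie]
          exact H.add_mem (H.lie_mem hy.2 hz.1) (H.lie_mem hy.1 hz.2)⟩) hh'
    exact this.2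
  -- H is contained in ker χ
  have hHker : ∀ h ∈ H, χ h = 0 := by
    intro h hh
    have hh' : h ∈ LieSubalgebra.lieSpan K LΓ (U : Set LΓ) := hh
    exact LieSubalgebra.lieSpan_induction (R := K) (L := LΓ) (s := (U : Set LΓ))
      (p := fun y _ => χ y = 0)
      (fun u hu => ((hmemU u).1 hu).2) χ.map_zero
      (fun y z _ _ hy hz => by show χ (y + z) = 0; rw [map_add χ, hy, hz, add_zero])
      (fun r y _ hy => by show χ (r • y) = 0; rw [map_smul χ, hy, smul_zero])
      (fun y z _ _ _ _ => by show χ ⁅y, z⁆ = 0; rw [χ.map_lie, Ring.lie_def, mul_comm, sub_self]) hh'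
  -- LΓ is generated by the x v
  have hgen : ∀ y : LΓ, y ∈ LieSubalgebra.lieSpan K LΓ (Set.range x) := by
    intro y
    let f : FreeLieAlgebra K V →ₗ⁅K⁆ (LieSubalgebra.lieSpan K LΓ (Set.range x)) :=
      FreeLieAlgebra.lift K fun v => ⟨x v, LieSubalgebra.subset_lieSpan (Set.mem_range_self v)⟩
    have hcomp : (LieSubalgebra.lieSpan K LΓ (Set.range x)).incl.comp f = π := by
      apply FreeLieAlgebra.hom_ext
      intro v
      simp only [LieHom.comp_apply, f, FreeLieAlgebra.lift_of_apply]
      rfl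
    obtain ⟨z, rfl⟩ := hπ y
    rw [← hcomp]
    exact (f z).2
  -- decomposition LΓ = H + K • x v₀
  have hdecomp : ∀ y : LΓ, ∃ h ∈ H, ∃ a : K, y = h + a • x v₀ := by
    set M : Submodule K LΓ := H.toSubmodule ⊔ K ∙ x v₀ with hMdef
    have hmemM : ∀ y : LΓ, y ∈ M → ∃ h ∈ H, ∃ a : K, y = h + a • x v₀ := by
      intro y hy
      obtain ⟨h, hh, z, hz, rfl⟩ := Submodule.mem_sup.1 hy
      obtain ⟨a, rfl⟩ := Submodule.mem_span_singleton.1 hz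
      exact ⟨h, hh, a, rfl⟩
    have hMlie : ∀ {m₁ m₂ : LΓ}, m₁ ∈ M → m₂ ∈ M → ⁅m₁, m₂⁆ ∈ M := by
      intro m₁ m₂ h₁ h₂
      obtain ⟨h₁', hh₁, a₁, rfl⟩ := hmemM _ h₁
      obtain ⟨h₂', hh₂, a₂, rfl⟩ := hmemM _ h₂
      have hexp : ⁅h₁' + a₁ • x v₀, h₂' + a₂ • x v₀⁆ =
          ⁅h₁', h₂'⁆ + a₂ • ⁅h₁', x v₀⁆ + a₁ • ⁅x v₀, h₂'⁆ + (a₂ * a₁) • ⁅x v₀, x v₀⁆ := by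
        rw [add_lie, lie_add, lie_add, smul_lie, lie_smul, lie_smul, smul_lie, smul_smul]
        abel
      rw [hexp, lie_self, smul_zero, add_zero]
      have m1 : ⁅h₁', h₂'⁆ ∈ H := H.lie_mem hh₁ hh₂
      have m2 : ⁅h₁', x v₀⁆ ∈ H := by
        rw [← lie_skew]
        exact H.neg_mem (hadH _ hh₁)
      have m3 : ⁅x v₀, h₂'⁆ ∈ H := hadH _ hh₂
      exact Submodule.mem_sup_left
        (H.add_mem (H.add_mem m1 (H.smul_mem _ m2)) (H.smul_mem _ m3))
    let M' : LieSubalgebra K LΓ := { M with lie_mem' := hMlie }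
    have hxM : ∀ v, x v ∈ M' := by
      intro v
      show x v ∈ M
      have : x v = (x v - (c v / c v₀) • x v₀) + (c v / c v₀) • x v₀ := by abel
      rw [this]
      exact M.add_mem (Submodule.mem_sup_left (hUH _ (hdvw v v₀ hv₀)))
        (Submodule.mem_sup_right (Submodule.smul_mem _ _ (Submodule.mem_span_singleton_self _)))
    intro y
    have : LieSubalgebra.lieSpan K LΓ (Set.range x) ≤ M' := by
      rw [LieSubalgebra.lieSpan_le]
      rintro _ ⟨v, rfl⟩
      exact hxM v
    exact hmemM y (this (hgen y))
  -- ker χ is contained in H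
  have hkerH : ∀ y : LΓ, χ y = 0 → y ∈ H := by
    intro y hy
    obtain ⟨h, hh, a, rfl⟩ := hdecomp y
    have : a * c v₀ = 0 := by
      have := hy
      rw [map_add χ, map_smul χ, hHker h hh, zero_add, smul_eq_mul, hχx] at this
      exact this
    rcases mul_eq_zero.1 this with ha | h0
    · rw [ha, zero_smul, add_zero]; exact hh
    · exact absurd h0 hv₀
  -- conclude
  have hmain : (H : Set LΓ) = (χ.ker : Set LΓ) := by
    ext y
    constructor
    · intro hy
      exact LieHom.mem_ker.2 (hHker y hy)
    · intro hy
      exact hkerH y (LieHom.mem_ker.1 hy)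
  constructor
  · exact hmain
  · refine ⟨E, hEfin, ?_⟩
    have h1 : LieSubalgebra.lieSpan K LΓ E ≤ H := by
      rw [LieSubalgebra.lieSpan_le]
      exact hEU.trans LieSubalgebra.subset_lieSpan
    have h2 : H ≤ LieSubalgebra.lieSpan K LΓ E := by
      rw [hHdef, LieSubalgebra.lieSpan_le]
      exact hUspan.trans (LieSubalgebra.submodule_span_le_lieSpan)
    rw [← hmain]
    exact congrArg _ (le_antisymm h1 h2)
end

section
/- Let Γ be a finite simple graph and χ a character whose living subgraph Γ_χ is connected but not dominant in Γ. Then the ideal I_χ of L_Γ is not finitely generated as a Lie algebra. -/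
universe u

attribute [local instance 100] LieRing.ofAssociativeRing

/-! Auxiliary construction: the semidirect product Lie algebra `K ⋉ K[X]`, where the
`K`-factor acts on the abelian ideal `K[X]` by multiplication by `X`. -/

/-- `SD15 K` is the vector space `K × K[X]` with Lie bracket
`⁅(a,p),(b,q)⁆ = (0, a•(X*q) - b•(X*p))`. -/
@[ext]
structure SD15 (K : Type) [Field K] : Type where
  a : K
  p : Polynomial K

namespace SD15

variable {K : Type} [Field K]

noncomputable instance : Add (SD15 K) := ⟨fun x y => ⟨x.a + y.a, x.p + y.p⟩⟩
noncomputable instance : Zero (SD15 K) := ⟨⟨0, 0⟩⟩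
noncomputable instance : Neg (SD15 K) := ⟨fun x => ⟨-x.a, -x.p⟩⟩
noncomputable instance : SMul K (SD15 K) := ⟨fun t x => ⟨t * x.a, t • x.p⟩⟩

@[simp] lemma add_a (x y : SD15 K) : (x + y).a = x.a + y.a := rfl
@[simp] lemma add_p (x y : SD15 K) : (x + y).p = x.p + y.p := rfl
@[simp] lemma zero_a : (0 : SD15 K).a = 0 := rfl
@[simp] lemma zero_p : (0 : SD15 K).p = 0 := rfl
@[simp] lemma neg_a (x : SD15 K) : (-x).a = -x.a := rfl
@[simp] lemma neg_p (x : SD15 K) : (-x).p = -x.p := rfl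
@[simp] lemma smul_a (t : K) (x : SD15 K) : (t • x).a = t * x.a := rfl
@[simp] lemma smul_p (t : K) (x : SD15 K) : (t • x).p = t • x.p := rfl

noncomputable instance : AddCommGroup (SD15 K) where
  add_assoc x y z := by ext : 1 <;> simp [add_assoc]
  zero_add x := by ext : 1 <;> simp
  add_zero x := by ext : 1 <;> simp
  add_comm x y := by ext : 1 <;> simp [add_comm]
  neg_add_cancel x := by ext : 1 <;> simp
  nsmul := nsmulRec
  zsmul := zsmulRec

noncomputable instance : Module K (SD15 K) where
  one_smul x := by ext : 1 <;> simp
  mul_smul t u x := by ext : 1 <;> simp [mul_assoc, mul_smul]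
  smul_zero t := by ext : 1 <;> simp
  smul_add t x y := by ext : 1 <;> simp [mul_add]
  add_smul t u x := by ext : 1 <;> simp [add_mul, add_smul]
  zero_smul x := by ext : 1 <;> simp

noncomputable instance : Bracket (SD15 K) (SD15 K) :=
  ⟨fun x y => ⟨0, x.a • (Polynomial.X * y.p) - y.a • (Polynomial.X * x.p)⟩⟩

@[simp] lemma lie_a (x y : SD15 K) : (⁅x, y⁆).a = 0 := rfl
@[simp] lemma lie_p (x y : SD15 K) :
    (⁅x, y⁆).p = x.a • (Polynomial.X * y.p) - y.a • (Polynomial.X * x.p) := rfl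

noncomputable instance : LieRing (SD15 K) where
  add_lie x y z := by
    ext : 1 <;> simp [Polynomial.smul_eq_C_mul] <;> ring
  lie_add x y z := by
    ext : 1 <;> simp [Polynomial.smul_eq_C_mul] <;> ring
  lie_self x := by ext : 1 <;> simp
  leibniz_lie x y z := by
    ext : 1 <;> simp [Polynomial.smul_eq_C_mul, mul_sub, sub_mul] <;> ring

noncomputable instance : LieAlgebra K (SD15 K) where
  lie_smul t x y := by
    ext : 1 <;> simp [Polynomial.smul_eq_C_mul] <;> ring

lemma lie_eq_zero_of_a {x y : SD15 K} (hx : x.a = 0) (hy : y.a = 0) : ⁅x, y⁆ = 0 := by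
  ext : 1 <;> simp [hx, hy]

lemma lie_eq_zero_of_p {x y : SD15 K} (hx : x.p = 0) (hy : y.p = 0) : ⁅x, y⁆ = 0 := by
  ext : 1 <;> simp [hx, hy]

/-- Projection to the first coordinate, a Lie algebra homomorphism to the abelian
Lie algebra `K`. -/
noncomputable def fstHom : SD15 K →ₗ⁅K⁆ K where
  toFun x := x.a
  map_add' x y := rfl
  map_smul' t x := rfl
  map_lie' {x y} := by simp [Ring.lie_def, mul_comm]

@[simp] lemma fstHom_apply (x : SD15 K) : fstHom x = x.a := rfl

end SD15

/-- Let `Γ` be a finite simple graph and `LΓ` the right-angled Artin Lie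
algebra over a field `K` on `Γ` (presented by a surjection `π` from the free Lie algebra on
the vertices whose kernel is the ideal generated by the brackets of adjacent vertices).
Let `χ` be a nonzero character, given by vertex values `c : V → K`.  If the living subgraph
`Γ_χ` is connected but not dominant in `Γ`, then the ideal `I_χ = ker χ` is not finitely
generated as a Lie algebra. -/
theorem statement15 (K : Type) [Field K] (V : Type) [Fintype V] [DecidableEq V]
    (G : SimpleGraph V)
    (LΓ : Type) [LieRing LΓ] [LieAlgebra K LΓ]
    (π : FreeLieAlgebra K V →ₗ⁅K⁆ LΓ) (hπ : Function.Surjective π)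
    (hker : π.ker = LieSubmodule.lieSpan K (FreeLieAlgebra K V)
      {x | ∃ v w : V, G.Adj v w ∧ x = ⁅FreeLieAlgebra.of K v, FreeLieAlgebra.of K w⁆})
    (c : V → K) (hc : c ≠ 0)
    (χ : LΓ →ₗ⁅K⁆ K) (hχ : ∀ v : V, χ (π (FreeLieAlgebra.of K v)) = c v)
    (hconn : (G.induce {v : V | c v ≠ 0}).Connected)
    (hnotdom : ∃ v : V, c v = 0 ∧ ∀ w : V, c w ≠ 0 → ¬ G.Adj v w) :
    ¬ ∃ s : Set LΓ, s.Finite ∧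
      ((LieSubalgebra.lieSpan K LΓ s : Set LΓ) = (χ.ker : Set LΓ)) := by
  classical
  obtain ⟨v₀, hv₀, hv₀dom⟩ := hnotdom
  obtain ⟨w₀, hw₀⟩ : ∃ w, c w ≠ 0 := by
    by_contra h
    push_neg at h
    exact hc (funext fun v => h v)
  have hw₀v₀ : w₀ ≠ v₀ := fun h => hw₀ (h ▸ hv₀)
  -- the vertex map into the model Lie algebra
  set fv : V → SD15 K := fun v => if v = v₀ then ⟨0, 1⟩ else ⟨c v, 0⟩ with hfv
  have hfv_v₀ : fv v₀ = ⟨0, 1⟩ := by simp [hfv]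
  have hfv_ne : ∀ v, v ≠ v₀ → fv v = ⟨c v, 0⟩ := by intro v hv; simp [hfv, hv]
  have hfv_dead : ∀ v, c v = 0 → (fv v).a = 0 := by
    intro v hv
    by_cases h : v = v₀
    · rw [h, hfv_v₀]
    · rw [hfv_ne v h]; exact hv
  set F : FreeLieAlgebra K V →ₗ⁅K⁆ SD15 K := FreeLieAlgebra.lift K fv with hF
  have hFof : ∀ v, F (FreeLieAlgebra.of K v) = fv v := fun v =>
    FreeLieAlgebra.lift_of_apply fv v
  -- F kills the kernel of π
  have hFker : ∀ x ∈ π.ker, F x = 0 := by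
    intro x hx
    rw [hker] at hx
    have hle : LieSubmodule.lieSpan K (FreeLieAlgebra K V)
        {x | ∃ v w : V, G.Adj v w ∧ x = ⁅FreeLieAlgebra.of K v, FreeLieAlgebra.of K w⁆}
        ≤ F.ker := by
      rw [LieSubmodule.lieSpan_le]
      rintro y ⟨v, w, hadj, rfl⟩
      rw [SetLike.mem_coe, LieHom.mem_ker, LieHom.map_lie, hFof, hFof]
      by_cases hv : v = v₀
      · have hwv : w ≠ v₀ := by
          intro h; rw [hv, h] at hadj; exact G.irrefl hadj
        have hcw : c w = 0 := by
          by_contra h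
          exact hv₀dom w h (hv ▸ hadj)
        refine SD15.lie_eq_zero_of_a ?_ ?_
        · rw [hv, hfv_v₀]
        · rw [hfv_ne w hwv]; exact hcw
      · by_cases hw : w = v₀
        · have hcv : c v = 0 := by
            by_contra h
            exact hv₀dom v h (hw ▸ hadj.symm)
          refine SD15.lie_eq_zero_of_a ?_ ?_
          · rw [hfv_ne v hv]; exact hcv
          · rw [hw, hfv_v₀]
        · refine SD15.lie_eq_zero_of_p ?_ ?_
          · rw [hfv_ne v hv]
          · rw [hfv_ne w hw]
    have := hle hx
    rwa [LieHom.mem_ker] at this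
  -- descend to ψ : LΓ → SD15 K
  have hcong : ∀ a b : FreeLieAlgebra K V, π a = π b → F a = F b := by
    intro a b h
    have h1 : a - b ∈ π.ker := by rw [LieHom.mem_ker, map_sub, h, sub_self]
    have h2 := hFker _ h1
    rwa [map_sub, sub_eq_zero] at h2
  set sec : LΓ → FreeLieAlgebra K V := Function.surjInv hπ with hsec
  have hsecπ : ∀ x, π (sec x) = x := fun x => Function.surjInv_eq hπ x
  have hkey : ∀ a, F (sec (π a)) = F a := fun a => hcong _ _ (hsecπ (π a))
  set ψ : LΓ →ₗ⁅K⁆ SD15 K :=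
    { toFun := fun x => F (sec x)
      map_add' := by
        intro x y
        obtain ⟨a, rfl⟩ := hπ x
        obtain ⟨b, rfl⟩ := hπ y
        rw [← map_add π, hkey, hkey, hkey, map_add]
      map_smul' := by
        intro t x
        obtain ⟨a, rfl⟩ := hπ x
        rw [← map_smul π, hkey, hkey, map_smul, RingHom.id_apply]
      map_lie' := by
        intro x y
        obtain ⟨a, rfl⟩ := hπ x
        obtain ⟨b, rfl⟩ := hπ y
        rw [← LieHom.map_lie π, hkey, hkey, hkey, LieHom.map_lie] } with hψ
  have hψπ : ∀ a, ψ (π a) = F a := hkey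
  -- first coordinate of ψ is χ
  have hfst : ∀ x, (ψ x).a = χ x := by
    have hhom : (SD15.fstHom.comp ψ).comp π = χ.comp π := by
      apply FreeLieAlgebra.hom_ext
      intro v
      rw [LieHom.comp_apply, LieHom.comp_apply, LieHom.comp_apply, hψπ, hFof,
        SD15.fstHom_apply, hχ]
      by_cases hv : v = v₀
      · rw [hv, hfv_v₀, hv₀]
      · rw [hfv_ne v hv]
    intro x
    obtain ⟨a, rfl⟩ := hπ x
    have := DFunLike.congr_fun hhom a
    simpa using this
  -- main argument
  rintro ⟨s, hsfin, hspan⟩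
  set W : Submodule K (Polynomial K) := Submodule.span K ((fun x => (ψ x).p) '' s) with hW
  -- the Lie subalgebra {0} × W of SD15 K
  set H : LieSubalgebra K (SD15 K) :=
    { carrier := {x | x.a = 0 ∧ x.p ∈ W}
      add_mem' := by
        rintro x y ⟨hx1, hx2⟩ ⟨hy1, hy2⟩
        exact ⟨by simp [hx1, hy1], by simpa using W.add_mem hx2 hy2⟩
      zero_mem' := ⟨rfl, by simpa using W.zero_mem⟩
      smul_mem' := by
        rintro t x ⟨hx1, hx2⟩
        exact ⟨by simp [hx1], by simpa using W.smul_mem t hx2⟩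
      lie_mem' := by
        rintro x y ⟨hx1, hx2⟩ ⟨hy1, hy2⟩
        refine ⟨rfl, ?_⟩
        simp only [SD15.lie_p, hx1, hy1, zero_smul, sub_zero, sub_self]
        simpa using W.zero_mem } with hH
  have hsH : s ⊆ ↑(LieSubalgebra.comap ψ H) := by
    intro x hx
    have hxker : χ x = 0 := by
      have : x ∈ (χ.ker : Set LΓ) := hspan ▸ LieSubalgebra.subset_lieSpan hx
      rwa [SetLike.mem_coe, LieHom.mem_ker] at this
    refine ⟨?_, ?_⟩
    · show (ψ x).a = 0
      rw [hfst]; exact hxker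
    · show (ψ x).p ∈ W
      exact Submodule.subset_span ⟨x, hx, rfl⟩
  have hspanH : ∀ x : LΓ, χ x = 0 → (ψ x).p ∈ W := by
    intro x hx
    have hxmem : x ∈ (χ.ker : Set LΓ) := by rwa [SetLike.mem_coe, LieHom.mem_ker]
    have h1 : x ∈ LieSubalgebra.lieSpan K LΓ s := by
      rw [← SetLike.mem_coe, hspan]; exact hxmem
    have h2 := (LieSubalgebra.lieSpan_le.mpr hsH) h1
    exact h2.2
  -- the iterated brackets
  set b : ℕ → FreeLieAlgebra K V := fun n =>
    Nat.rec (FreeLieAlgebra.of K v₀) (fun _ x => ⁅FreeLieAlgebra.of K w₀, x⁆) n with hb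
  have hb0 : b 0 = FreeLieAlgebra.of K v₀ := rfl
  have hbsucc : ∀ n, b (n + 1) = ⁅FreeLieAlgebra.of K w₀, b n⁆ := fun n => rfl
  have hχb : ∀ n, χ (π (b n)) = 0 := by
    intro n
    cases n with
    | zero => rw [hb0, hχ]; exact hv₀
    | succ n =>
        rw [hbsucc, LieHom.map_lie, LieHom.map_lie, Ring.lie_def, mul_comm, sub_self]
  have hFb : ∀ n, F (b n) = ⟨0, (c w₀) ^ n • Polynomial.X ^ n⟩ := by
    intro n
    induction n with
    | zero =>
        rw [hb0, hFof, hfv_v₀]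
        ext : 1
        · rfl
        · simp
    | succ n ih =>
        rw [hbsucc, LieHom.map_lie, hFof, hfv_ne w₀ hw₀v₀, ih]
        ext : 1
        · rfl
        · simp only [SD15.lie_p]
          simp only [Polynomial.smul_eq_C_mul, map_pow, map_mul, mul_zero, zero_mul,
            sub_zero, pow_succ]
          ring
  have hXW : ∀ n : ℕ, (Polynomial.X : Polynomial K) ^ n ∈ W := by
    intro n
    have h1 : (ψ (π (b n))).p ∈ W := hspanH _ (hχb n)
    rw [hψπ, hFb] at h1
    have h2 : (c w₀) ^ n • (Polynomial.X : Polynomial K) ^ n ∈ W := h1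
    rwa [W.smul_mem_iff (pow_ne_zero n hw₀)] at h2
  have hWtop : W = ⊤ := by
    rw [eq_top_iff, ← (Polynomial.basisMonomials K).span_eq, Submodule.span_le]
    rintro x ⟨n, rfl⟩
    rw [Polynomial.coe_basisMonomials]
    have := hXW n
    rwa [Polynomial.X_pow_eq_monomial] at this
  have hfin : Module.Finite K (Polynomial K) := by
    constructor
    rw [← hWtop, hW]
    exact Submodule.fg_def.mpr ⟨_, hsfin.image _, rfl⟩
  exact Polynomial.not_finite hfin
end

section
/- Let K be a field and C a chain complex …→ Cₙ → Cₙ₋₁ →…→ C₀ → 0 of finite dimensional K-vector spaces with differentials d̄. Consider the complex C ⊗_K K[v] of free K[v]-modules with differential d(c ⊗ f) = d̄(c) ⊗ vf. Then for each n there is a short exact sequence 0 → Im(d̄ₙ) → Hₙ(C ⊗ K[v], d) → Hₙ(C, d̄) ⊗_K K[v] → 0; consequently Hₙ(C ⊗ K[v], d) is finite dimensional over K if and only if Hₙ(C, d̄) = 0. -/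
open scoped TensorProduct

universe u

set_option maxHeartbeats 2000000 in
theorem aux18 (K : Type) [Field K]
    (P : Type) [CommRing P] [Algebra K P] (v : P)
    (e : P ≃ₐ[K] Polynomial K) (hv : e v = Polynomial.X)
    (L N M : Type) [AddCommGroup L] [Module K L] [AddCommGroup N] [Module K N]
    [AddCommGroup M] [Module K M] [FiniteDimensional K N]
    (f1 : L →ₗ[K] N) (f0 : N →ₗ[K] M) (hdd : f0 ∘ₗ f1 = 0) :
    (∃ (f : ↥(LinearMap.range f1) →ₗ[K]
          (↥(LinearMap.ker (TensorProduct.map f0 (LinearMap.mulLeft K v))) ⧸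
            (LinearMap.range (TensorProduct.map f1 (LinearMap.mulLeft K v))).comap
              (LinearMap.ker (TensorProduct.map f0 (LinearMap.mulLeft K v))).subtype))
       (g : (↥(LinearMap.ker (TensorProduct.map f0 (LinearMap.mulLeft K v))) ⧸
            (LinearMap.range (TensorProduct.map f1 (LinearMap.mulLeft K v))).comap
              (LinearMap.ker (TensorProduct.map f0 (LinearMap.mulLeft K v))).subtype) →ₗ[K]
          ((↥(LinearMap.ker f0) ⧸
            (LinearMap.range f1).comap (LinearMap.ker f0).subtype) ⊗[K] P)),
      Function.Injective f ∧ Function.Surjective g ∧ LinearMap.range f = LinearMap.ker g)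
    ∧ (FiniteDimensional K
        (↥(LinearMap.ker (TensorProduct.map f0 (LinearMap.mulLeft K v))) ⧸
          (LinearMap.range (TensorProduct.map f1 (LinearMap.mulLeft K v))).comap
            (LinearMap.ker (TensorProduct.map f0 (LinearMap.mulLeft K v))).subtype) ↔
        LinearMap.ker f0 = LinearMap.range f1) := by

  classical
  set V : P →ₗ[K] P := LinearMap.mulLeft K v with hV
  set dn : N ⊗[K] P →ₗ[K] M ⊗[K] P := TensorProduct.map f0 V with hdn
  set dn1 : L ⊗[K] P →ₗ[K] N ⊗[K] P := TensorProduct.map f1 V with hdn1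
  -- basic facts
  have hsub : LinearMap.range f1 ≤ LinearMap.ker f0 := by
    rintro x ⟨y, rfl⟩
    simp only [LinearMap.mem_ker]
    exact DFunLike.congr_fun hdd y
  set ε : P →ₗ[K] K := (Polynomial.lcoeff K 0) ∘ₗ e.toLinearMap with hε
  have hε1 : ε 1 = 1 := by simp [hε]
  have hεv : ∀ q : P, ε (v * q) = 0 := by
    intro q
    simp [hε, map_mul, hv, Polynomial.mul_coeff_zero]
  have hsplit : ∀ q : P, ∃ r : P, q - ε q • (1 : P) = v * r := by
    intro q
    have h0 : (e q - Polynomial.C (ε q)).coeff 0 = 0 := by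
      simp [hε]
    obtain ⟨t, ht⟩ := (Polynomial.X_dvd_iff).2 h0
    refine ⟨e.symm t, e.injective ?_⟩
    rw [map_mul, hv, map_sub, AlgEquiv.apply_symm_apply, ← ht]
    congr 1
    rw [map_smul]
    rw [Polynomial.smul_eq_C_mul, map_one, mul_one]
  -- θ : N ⊗ P → N,  x ⊗ q ↦ ε q • x
  set θ : N ⊗[K] P →ₗ[K] N :=
    (TensorProduct.rid K N).toLinearMap ∘ₗ (ε.lTensor N) with hθ
  have hθtmul : ∀ (x : N) (q : P), θ (x ⊗ₜ q) = ε q • x := by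
    intro x q; simp [hθ]
  have hVinj : Function.Injective V := by
    intro a b hab
    apply e.injective
    have : e (v * a) = e (v * b) := congrArg e hab
    rw [map_mul, map_mul, hv] at this
    exact mul_left_cancel₀ Polynomial.X_ne_zero this
  -- x ⊗ q ∈ ker dn for x ∈ ker f0
  have htker : ∀ (x : N), x ∈ LinearMap.ker f0 → ∀ q : P, x ⊗ₜ[K] q ∈ LinearMap.ker dn := by
    intro x hx q
    simp only [LinearMap.mem_ker] at hx ⊢
    rw [hdn, TensorProduct.map_tmul, hx, TensorProduct.zero_tmul]
  -- range dn1 ≤ ker dn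
  have hrk : LinearMap.range dn1 ≤ LinearMap.ker dn := by
    rw [LinearMap.range_le_ker_iff, hdn, hdn1, ← TensorProduct.map_comp, hdd]
    apply TensorProduct.ext'
    intro l q
    simp
  -- θ kills range dn1
  have hθd : ∀ z ∈ LinearMap.range dn1, θ z = 0 := by
    have : θ ∘ₗ dn1 = 0 := by
      apply TensorProduct.ext'
      intro l q
      rw [LinearMap.comp_apply, hdn1, TensorProduct.map_tmul, hθtmul, hV,
        LinearMap.mulLeft_apply, hεv, zero_smul, LinearMap.zero_apply]
    rintro z ⟨y, rfl⟩
    exact DFunLike.congr_fun this y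
  -- the quotient modules
  set S : Submodule K ↥(LinearMap.ker dn) :=
    (LinearMap.range dn1).comap (LinearMap.ker dn).subtype with hS
  set Sb : Submodule K ↥(LinearMap.ker f0) :=
    (LinearMap.range f1).comap (LinearMap.ker f0).subtype with hSb
  set π : ↥(LinearMap.ker f0) →ₗ[K] (↥(LinearMap.ker f0) ⧸ Sb) := Sb.mkQ with hπ
  -- the map f
  set φ0 : N →ₗ[K] N ⊗[K] P := (TensorProduct.mk K N P).flip 1 with hφ0
  have hφ0a : ∀ x : N, φ0 x = x ⊗ₜ[K] (1 : P) := fun x => rfl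
  set φ : ↥(LinearMap.range f1) →ₗ[K] ↥(LinearMap.ker dn) :=
    LinearMap.codRestrict _ (φ0 ∘ₗ (LinearMap.range f1).subtype)
      (fun x => htker x.1 (hsub x.2) 1) with hφ
  set f : ↥(LinearMap.range f1) →ₗ[K] (↥(LinearMap.ker dn) ⧸ S) := S.mkQ ∘ₗ φ with hf
  -- left inverse p of the inclusion of ker f0
  obtain ⟨p, hp⟩ := (LinearMap.ker f0).subtype.exists_leftInverse_of_injective
    (Submodule.ker_subtype _)
  have hpa : ∀ y : ↥(LinearMap.ker f0), p y.1 = y := fun y => DFunLike.congr_fun hp y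
  -- the map g
  set G : N ⊗[K] P →ₗ[K] (↥(LinearMap.ker f0) ⧸ Sb) ⊗[K] P := (π ∘ₗ p).rTensor P with hG
  have hGd : ∀ z ∈ LinearMap.range dn1, G z = 0 := by
    have hc : (π ∘ₗ p) ∘ₗ f1 = 0 := by
      apply LinearMap.ext
      intro l
      have h1 : f1 l = (LinearMap.ker f0).subtype ⟨f1 l, hsub ⟨l, rfl⟩⟩ := rfl
      rw [LinearMap.comp_apply, LinearMap.comp_apply, LinearMap.zero_apply, h1, Submodule.subtype_apply, hpa,
        hπ, Submodule.mkQ_apply, Submodule.Quotient.mk_eq_zero]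
      exact ⟨l, rfl⟩
    have : G ∘ₗ dn1 = 0 := by
      rw [hG, hdn1, LinearMap.rTensor, ← TensorProduct.map_comp, hc]
      apply TensorProduct.ext'
      intro l q
      simp
    rintro z ⟨y, rfl⟩
    exact DFunLike.congr_fun this y
  have hgker : S ≤ LinearMap.ker (G ∘ₗ (LinearMap.ker dn).subtype) := by
    intro x hx
    simp only [LinearMap.mem_ker, LinearMap.comp_apply, Submodule.coe_subtype]
    exact hGd x.1 hx
  set g : (↥(LinearMap.ker dn) ⧸ S) →ₗ[K] (↥(LinearMap.ker f0) ⧸ Sb) ⊗[K] P :=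
    Submodule.liftQ S (G ∘ₗ (LinearMap.ker dn).subtype) hgker with hg
  -- injectivity of f
  have hfinj : Function.Injective f := by
    rw [← LinearMap.ker_eq_bot]
    rw [Submodule.eq_bot_iff]
    intro x hx
    have hx' : φ x ∈ S := by
      simpa [hf, Submodule.Quotient.mk_eq_zero] using hx
    have hx2 : (x : N) ⊗ₜ[K] (1 : P) ∈ LinearMap.range dn1 := hx'
    have := hθd _ hx2
    rw [hθtmul, hε1, one_smul] at this
    exact Subtype.ext this
  -- surjectivity of g
  have hgsurj : Function.Surjective g := by
    intro t
    induction t using TensorProduct.induction_on with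
    | zero => exact ⟨0, map_zero g⟩
    | tmul h q =>
      obtain ⟨y, rfl⟩ := Sb.mkQ_surjective h
      refine ⟨S.mkQ ⟨y.1 ⊗ₜ[K] q, htker y.1 y.2 q⟩, ?_⟩
      rw [hg, Submodule.mkQ_apply, Submodule.liftQ_apply]
      simp only [LinearMap.comp_apply, Submodule.coe_subtype, hG, LinearMap.rTensor_tmul,
        LinearMap.comp_apply, hpa, hπ]
    | add a b ha hb =>
      obtain ⟨x, rfl⟩ := ha
      obtain ⟨y, rfl⟩ := hb
      exact ⟨x + y, map_add g x y⟩
  -- range f ≤ ker g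
  have hle : LinearMap.range f ≤ LinearMap.ker g := by
    rintro _ ⟨x, rfl⟩
    rw [LinearMap.mem_ker, hf, LinearMap.comp_apply, Submodule.mkQ_apply, hg,
      Submodule.liftQ_apply]
    have hφx : ((φ x : N ⊗[K] P)) = (x : N) ⊗ₜ[K] (1 : P) := rfl
    rw [LinearMap.comp_apply, Submodule.subtype_apply, hφx, hG, LinearMap.rTensor_tmul]
    have hx0 : (π ∘ₗ p) (x : N) = 0 := by
      have h1 : (x : N) = (LinearMap.ker f0).subtype ⟨x.1, hsub x.2⟩ := rfl
      rw [LinearMap.comp_apply, h1, Submodule.subtype_apply, hpa, hπ, Submodule.mkQ_apply,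
        Submodule.Quotient.mk_eq_zero]
      exact x.2
    rw [hx0, TensorProduct.zero_tmul]
  -- ker g ≤ range f
  have hge : LinearMap.ker g ≤ LinearMap.range f := by
    intro zb hzb
    obtain ⟨z, rfl⟩ := S.mkQ_surjective zb
    have hGz : G z.1 = 0 := by
      rw [LinearMap.mem_ker, hg, Submodule.mkQ_apply, Submodule.liftQ_apply,
        LinearMap.comp_apply, Submodule.subtype_apply] at hzb
      exact hzb
    -- z.1 ∈ ker (rTensor f0)
    have hzk : (f0.rTensor P) z.1 = 0 := by
      have hinj : Function.Injective (V.lTensor M) :=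
        Module.Flat.lTensor_preserves_injective_linearMap V hVinj
      apply hinj
      rw [← LinearMap.comp_apply, LinearMap.lTensor_comp_rTensor, map_zero]
      exact z.2
    obtain ⟨w, hw⟩ := ((Module.Flat.rTensor_exact P
      (LinearMap.exact_subtype_ker_map f0)) z.1).mp hzk
    -- G z.1 = rTensor π w
    have hπw : (π.rTensor P) w = 0 := by
      have h2 : (π ∘ₗ p) ∘ₗ (LinearMap.ker f0).subtype = π := by
        rw [LinearMap.comp_assoc, hp, LinearMap.comp_id]
      rw [← h2, LinearMap.rTensor_comp, LinearMap.comp_apply, hw]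
      exact hGz
    obtain ⟨u, hu⟩ := ((Module.Flat.rTensor_exact P
      (LinearMap.exact_subtype_ker_map π)) w).mp hπw
    set j : ↥(LinearMap.ker π) →ₗ[K] N :=
      (LinearMap.ker f0).subtype ∘ₗ (LinearMap.ker π).subtype with hj
    have hzu : z.1 = (j.rTensor P) u := by
      rw [hj, LinearMap.rTensor_comp, LinearMap.comp_apply, hu, hw]
    have hjmem : ∀ s : ↥(LinearMap.ker π), j s ∈ LinearMap.range f1 := by
      intro s
      have hs : Sb.mkQ s.1 = 0 := s.2
      rw [Submodule.mkQ_apply, Submodule.Quotient.mk_eq_zero] at hs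
      exact hs
    -- key claim by induction
    have hclaim : ∀ u0 : ↥(LinearMap.ker π) ⊗[K] P,
        θ ((j.rTensor P) u0) ∈ LinearMap.range f1 ∧
        ((j.rTensor P) u0) - φ0 (θ ((j.rTensor P) u0)) ∈ LinearMap.range dn1 := by
      intro u0
      induction u0 using TensorProduct.induction_on with
      | zero =>
        refine ⟨?_, ?_⟩
        · rw [map_zero, map_zero]; exact Submodule.zero_mem _
        · rw [map_zero, map_zero, map_zero, sub_zero]; exact Submodule.zero_mem _
      | tmul s q =>
        constructor
        · rw [LinearMap.rTensor_tmul, hθtmul]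
          exact Submodule.smul_mem _ _ (hjmem s)
        · rw [LinearMap.rTensor_tmul, hθtmul, hφ0a]
          obtain ⟨r, hr⟩ := hsplit q
          obtain ⟨l, hl⟩ := hjmem s
          rw [TensorProduct.smul_tmul, ← TensorProduct.tmul_sub, hr, ← hl]
          exact ⟨l ⊗ₜ[K] r, rfl⟩
      | add a b ha hb =>
        rw [map_add, map_add, map_add]
        constructor
        · exact Submodule.add_mem _ ha.1 hb.1
        · have : ((j.rTensor P) a + (j.rTensor P) b)
              - (φ0 (θ ((j.rTensor P) a)) + φ0 (θ ((j.rTensor P) b)))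
              = (((j.rTensor P) a) - φ0 (θ ((j.rTensor P) a)))
              + (((j.rTensor P) b) - φ0 (θ ((j.rTensor P) b))) := by abel
          rw [this]
          exact Submodule.add_mem _ ha.2 hb.2
    have hx0r : θ z.1 ∈ LinearMap.range f1 := by rw [hzu]; exact (hclaim u).1
    have hzdiff : z.1 - φ0 (θ z.1) ∈ LinearMap.range dn1 := by
      rw [hzu]; exact (hclaim u).2
    refine ⟨⟨θ z.1, hx0r⟩, ?_⟩
    rw [hf, LinearMap.comp_apply, Submodule.mkQ_apply, Submodule.mkQ_apply,
      Submodule.Quotient.eq]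
    show ((φ ⟨θ z.1, hx0r⟩ - z : ↥(LinearMap.ker dn)) : N ⊗[K] P) ∈ LinearMap.range dn1
    have hval : ((φ ⟨θ z.1, hx0r⟩ - z : ↥(LinearMap.ker dn)) : N ⊗[K] P)
        = -(z.1 - φ0 (θ z.1)) := by
      rw [Submodule.coe_sub, neg_sub]
      rfl
    rw [hval]
    exact Submodule.neg_mem _ hzdiff
  -- Part 2
  have hiff : FiniteDimensional K (↥(LinearMap.ker dn) ⧸ S) ↔
      LinearMap.ker f0 = LinearMap.range f1 := by
    constructor
    · intro hfin
      refine le_antisymm ?_ hsub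
      haveI : FiniteDimensional K ((↥(LinearMap.ker f0) ⧸ Sb) ⊗[K] P) :=
        Module.Finite.of_surjective g hgsurj
      have hzero : ∀ h : ↥(LinearMap.ker f0) ⧸ Sb, h = 0 := by
        by_contra hc
        push_neg at hc
        obtain ⟨h0, hh0⟩ := hc
        obtain ⟨χ, hχ⟩ : ∃ χ : (↥(LinearMap.ker f0) ⧸ Sb) →ₗ[K] K, χ h0 ≠ 0 := by
          by_contra hcc
          push_neg at hcc
          exact hh0 ((Module.forall_dual_apply_eq_zero_iff K h0).mp hcc)
        have hψinj : Function.Injective (TensorProduct.mk K _ P h0) := by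
          intro a b hab
          have h2 := congrArg ((TensorProduct.lid K P).toLinearMap ∘ₗ (χ.rTensor P)) hab
          simp only [LinearMap.comp_apply, TensorProduct.mk_apply, LinearMap.rTensor_tmul,
            LinearEquiv.coe_coe, TensorProduct.lid_tmul] at h2
          exact smul_right_injective P hχ h2
        haveI : FiniteDimensional K P :=
          FiniteDimensional.of_injective (TensorProduct.mk K _ P h0) hψinj
        haveI : FiniteDimensional K (Polynomial K) :=
          LinearEquiv.finiteDimensional e.toLinearEquiv
        exact Polynomial.not_finite (R := K) inferInstance
      intro x hx
      have h3 : Sb.mkQ ⟨x, hx⟩ = 0 := hzero _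
      rw [Submodule.mkQ_apply, Submodule.Quotient.mk_eq_zero] at h3
      exact h3
    · intro hk
      have hzero : ∀ h : ↥(LinearMap.ker f0) ⧸ Sb, h = 0 := by
        intro h
        obtain ⟨y, rfl⟩ := Sb.mkQ_surjective h
        rw [Submodule.mkQ_apply, Submodule.Quotient.mk_eq_zero]
        exact show (y : N) ∈ LinearMap.range f1 from hk ▸ y.2
      have hzero2 : ∀ t : (↥(LinearMap.ker f0) ⧸ Sb) ⊗[K] P, t = 0 := by
        intro t
        induction t using TensorProduct.induction_on with
        | zero => rfl
        | tmul h q => rw [hzero h, TensorProduct.zero_tmul]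
        | add a b ha hb => rw [ha, hb, add_zero]
      have hftop : LinearMap.range f = ⊤ := by
        rw [le_antisymm hle hge]
        rw [eq_top_iff]
        intro zb _
        rw [LinearMap.mem_ker]
        exact hzero2 _
      exact Module.Finite.of_surjective f (LinearMap.range_eq_top.mp hftop)
  exact ⟨⟨f, g, hfinj, hgsurj, le_antisymm hle hge⟩, hiff⟩

/-- Let `K` be a field and `C` a chain complex `… → Cₙ → … → C₀ → 0` of
finite dimensional `K`-vector spaces with differentials `d̄ₙ : C_{n+1} → Cₙ`.  Consider the
complex `C ⊗_K K[v]` of free `K[v]`-modules with twisted differential `d(c ⊗ f) = d̄(c) ⊗ vf`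
(here the polynomial ring `K[v]` is presented as a `K`-algebra `P` with a distinguished
element `v`, via an algebra isomorphism with `Polynomial K` sending `v` to `X`).
Then for each `n` there is a short exact sequence
`0 → Im(d̄_{n+1}) → H_{n+1}(C ⊗ K[v], d) → H_{n+1}(C, d̄) ⊗_K K[v] → 0`;
consequently `H_{n+1}(C ⊗ K[v], d)` is finite dimensional over `K` if and only if
`H_{n+1}(C, d̄) = 0`. -/
theorem statement18 (K : Type) [Field K]
    (P : Type) [CommRing P] [Algebra K P] (v : P)
    (e : P ≃ₐ[K] Polynomial K) (hv : e v = Polynomial.X)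
    (C : ℕ → Type) [∀ n, AddCommGroup (C n)] [∀ n, Module K (C n)]
    [∀ n, FiniteDimensional K (C n)]
    (dbar : ∀ n : ℕ, C (n + 1) →ₗ[K] C n)
    (hdd : ∀ n : ℕ, (dbar n) ∘ₗ (dbar (n + 1)) = 0)
    (d : ∀ j : ℕ, (C (j + 1) ⊗[K] P) →ₗ[K] (C j ⊗[K] P))
    (hd : ∀ j : ℕ, d j = TensorProduct.map (dbar j) (LinearMap.mulLeft K v))
    (n : ℕ) :
    (∃ (f : ↥(LinearMap.range (dbar (n + 1))) →ₗ[K]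
          (↥(LinearMap.ker (d n)) ⧸
            (LinearMap.range (d (n + 1))).comap (LinearMap.ker (d n)).subtype))
       (g : (↥(LinearMap.ker (d n)) ⧸
            (LinearMap.range (d (n + 1))).comap (LinearMap.ker (d n)).subtype) →ₗ[K]
          ((↥(LinearMap.ker (dbar n)) ⧸
            (LinearMap.range (dbar (n + 1))).comap (LinearMap.ker (dbar n)).subtype)
              ⊗[K] P)),
      Function.Injective f ∧ Function.Surjective g ∧ LinearMap.range f = LinearMap.ker g)
    ∧ (FiniteDimensional K
        (↥(LinearMap.ker (d n)) ⧸
          (LinearMap.range (d (n + 1))).comap (LinearMap.ker (d n)).subtype) ↔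
        LinearMap.ker (dbar n) = LinearMap.range (dbar (n + 1))) := by
  rw [hd n, hd (n + 1)]
  exact aux18 K P v e hv (C (n+2)) (C (n+1)) (C n) (dbar (n+1)) (dbar n) (hdd n)
end
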